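/- Let G be a connected simple graph with vertex set {0,...,n}, reduced incidence matrix ∂~ (incidence matrix with the row of vertex 0 deleted), and let iota be an integer matrix whose columns form a Z-basis of Flow(G) = Z^m ∩ ker ∂. Then the cokernels Z^n / im(∂~ ∂~^T) and Z^g / im(iota^T iota) are isomorphic as finite abelian groups, where g = m - n. -/

import Mathlib

open Matrix

noncomputable def quotEquivOfSurj {R M N : Type*} [Ring R] [AddCommGroup M] [AddCommGroup N]
    [Module R M] [Module R N]
    (f : M →ₗ[R] N) (hf : Function.Surjective f) (P : Submodule R N) :
    (M ⧸ P.comap f) ≃ₗ[R] N ⧸ P := by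
  refine LinearEquiv.ofBijective (Submodule.mapQ (P.comap f) P f le_rfl) ⟨?_, ?_⟩
  · intro x y h
    obtain ⟨a, rfl⟩ := Submodule.mkQ_surjective _ x
    obtain ⟨b, rfl⟩ := Submodule.mkQ_surjective _ y
    simp only [Submodule.mkQ_apply, Submodule.mapQ_apply] at h
    rw [Submodule.Quotient.eq] at h
    simp only [Submodule.mkQ_apply]
    rw [Submodule.Quotient.eq]
    simpa [Submodule.mem_comap, map_sub] using h
  · intro y
    obtain ⟨z, rfl⟩ := Submodule.mkQ_surjective P y
    obtain ⟨x, rfl⟩ := hf z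
    exact ⟨Submodule.Quotient.mk x, rfl⟩

lemma comap_range_mul {a b : ℕ} (A : Matrix (Fin a) (Fin b) ℤ) :
    (LinearMap.range (Matrix.toLin' (A * Aᵀ))).comap (Matrix.toLin' A) =
      LinearMap.range (Matrix.toLin' Aᵀ) ⊔ LinearMap.ker (Matrix.toLin' A) := by
  ext x
  simp only [Submodule.mem_comap, LinearMap.mem_range, Submodule.mem_sup, LinearMap.mem_ker]
  constructor
  · rintro ⟨y, hy⟩
    refine ⟨Matrix.toLin' Aᵀ y, ⟨y, rfl⟩, x - Matrix.toLin' Aᵀ y, ?_, by ring⟩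
    rw [map_sub, ← Matrix.toLin'_mul_apply, hy, sub_self]
  · rintro ⟨u, ⟨y, rfl⟩, z, hz, rfl⟩
    exact ⟨y, by rw [map_add, hz, add_zero, Matrix.toLin'_mul_apply]⟩

/-- restriction of the standard basis vector of `v` to the coordinates `1..n` -/
def phiAux (n : ℕ) (v : Fin (n+1)) : Fin n → ℤ := fun i => if i.succ = v then 1 else 0

theorem stmt_11 (n m g : ℕ) (G : SimpleGraph (Fin (n + 1))) (hG : G.Connected)
    (hg : m = n + g)
    (head tail : Fin m → Fin (n + 1))
    (hadj : ∀ k, G.Adj (head k) (tail k))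
    (hinj : Function.Injective fun k => s(head k, tail k))
    (hsurj : ∀ e ∈ G.edgeSet, ∃ k, s(head k, tail k) = e)
    (del : Matrix (Fin (n + 1)) (Fin m) ℤ)
    (hdel : ∀ v k, del v k = if v = head k then 1 else if v = tail k then -1 else 0)
    (delRed : Matrix (Fin n) (Fin m) ℤ)
    (hdelRed : ∀ i k, delRed i k = del i.succ k)
    (iota : Matrix (Fin m) (Fin g) ℤ)
    (hli : LinearIndependent ℤ iota.transpose)
    (hspan : Submodule.span ℤ (Set.range iota.transpose) = LinearMap.ker (Matrix.toLin' del)) :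
    Nonempty (((Fin n → ℤ) ⧸ LinearMap.range (Matrix.toLin' (delRed * delRed.transpose))) ≃+
      ((Fin g → ℤ) ⧸ LinearMap.range (Matrix.toLin' (iota.transpose * iota)))) := by
  classical
  -- kernels of the full and reduced incidence matrices agree
  have hker : LinearMap.ker (Matrix.toLin' del) = LinearMap.ker (Matrix.toLin' delRed) := by
    have hcol : ∀ k, ∑ v : Fin (n+1), del v k = 0 := by
      intro k
      have hne : head k ≠ tail k := (hadj k).ne
      have : ∀ v : Fin (n+1), del v k =
          (if v = head k then (1:ℤ) else 0) + (if v = tail k then (-1:ℤ) else 0) := by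
        intro v
        rw [hdel]
        split_ifs with h1 h2 <;> simp_all
      simp only [this, Finset.sum_add_distrib, Finset.sum_ite_eq' Finset.univ]
      simp
    ext x
    simp only [LinearMap.mem_ker, Matrix.toLin'_apply]
    constructor
    · intro h
      funext i
      have := congrFun h i.succ
      simpa [Matrix.mulVec, dotProduct, hdelRed] using this
    · intro h
      funext v
      induction v using Fin.cases with
      | zero =>
        have h0 : ∀ k, del 0 k = -∑ i : Fin n, del i.succ k := by
          intro k
          have := hcol k
          rw [Fin.sum_univ_succ] at this
          linarith
        have hsum : ∀ i : Fin n, ∑ k, del i.succ k * x k = 0 := by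
          intro i
          have := congrFun h i
          simpa [Matrix.mulVec, dotProduct, hdelRed] using this
        show (del *ᵥ x) 0 = (0 : (Fin (n+1) → ℤ)) 0
        simp only [Matrix.mulVec, dotProduct, h0, Pi.zero_apply, neg_mul,
          Finset.sum_neg_distrib, Finset.sum_mul]
        rw [Finset.sum_comm]
        simp [hsum]
      | succ i =>
        have := congrFun h i
        simpa [Matrix.mulVec, dotProduct, hdelRed] using this
  -- the reduced incidence map is surjective
  have hsurjD : Function.Surjective (Matrix.toLin' delRed) := by
    set E := LinearMap.range (Matrix.toLin' delRed) with hE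
    have hcolE : ∀ k, (fun i => delRed i k) ∈ E := by
      intro k
      refine ⟨Pi.single k 1, ?_⟩
      rw [Matrix.toLin'_apply, Matrix.mulVec_single_one]
      rfl
    have hcols : ∀ k, (fun i => delRed i k) = phiAux n (head k) - phiAux n (tail k) := by
      intro k
      have hne : head k ≠ tail k := (hadj k).ne
      funext i
      simp only [hdelRed, hdel, Pi.sub_apply, phiAux]
      split_ifs with h1 h2 h2
      · exact absurd (h1.symm.trans h2) hne
      · ring
      · ring
      · ring
    have hstep : ∀ v w, G.Adj v w → phiAux n v - phiAux n w ∈ E := by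
      intro v w hvw
      obtain ⟨k, hk⟩ := hsurj s(v, w) (G.mem_edgeSet.mpr hvw)
      rw [Sym2.eq_iff] at hk
      rcases hk with ⟨h1, h2⟩ | ⟨h1, h2⟩
      · rw [← h1, ← h2, ← hcols k]; exact hcolE k
      · have : phiAux n v - phiAux n w = -(fun i => delRed i k) := by
          rw [hcols k, h1, h2, neg_sub]
        rw [this]; exact E.neg_mem (hcolE k)
    have hwalk : ∀ (v w : Fin (n+1)) (_ : G.Walk v w), phiAux n v - phiAux n w ∈ E := by
      intro v w p
      induction p with
      | nil => simpa using E.zero_mem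
      | cons h p ih =>
        have := E.add_mem (hstep _ _ h) ih
        simpa [sub_add_sub_cancel] using this
    have hphi0 : phiAux n 0 = 0 := by
      funext i
      simp [phiAux, Fin.succ_ne_zero i]
    have hbasis : ∀ i : Fin n, (fun j => if i = j then (1:ℤ) else 0) ∈ E := by
      intro i
      have := hwalk i.succ 0 (hG.preconnected i.succ 0).some
      rw [hphi0, sub_zero] at this
      convert this using 1
      funext j
      simp [phiAux, Fin.succ_inj, eq_comm]
    rw [← LinearMap.range_eq_top, eq_top_iff]
    intro x _
    rw [pi_eq_sum_univ x]
    exact Submodule.sum_mem _ fun i _ =>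
      Submodule.smul_mem _ _ (hbasis i)
  -- a matrix right inverse of delRed
  obtain ⟨σ, hσ⟩ := (Matrix.toLin' delRed).exists_rightInverse_of_surjective
    (LinearMap.range_eq_top.2 hsurjD)
  set S : Matrix (Fin m) (Fin n) ℤ := LinearMap.toMatrix' σ with hS
  have hDS : delRed * S = 1 := by
    apply Matrix.toLin'.injective
    rw [Matrix.toLin'_mul, hS, Matrix.toLin'_toMatrix', Matrix.toLin'_one]
    exact hσ
  -- range of iota is the flow lattice = ker delRed
  have hrange : LinearMap.range (Matrix.toLin' iota) = LinearMap.ker (Matrix.toLin' del) := by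
    rw [Matrix.range_toLin']
    exact hspan
  have hkerR : LinearMap.ker (Matrix.toLin' delRed) = LinearMap.range (Matrix.toLin' iota) := by
    rw [hrange, hker]
  -- the quotient by the flow lattice is free, hence projective
  have e1 : ((Fin m → ℤ) ⧸ (LinearMap.ker (Matrix.toLin' del))) ≃ₗ[ℤ] LinearMap.range (Matrix.toLin' del) :=
    (Matrix.toLin' del).quotKerEquivRange
  haveI : Module.Free ℤ ((Fin m → ℤ) ⧸ (LinearMap.ker (Matrix.toLin' del))) := Module.Free.of_equiv e1.symm
  obtain ⟨σ2, hσ2⟩ := (LinearMap.ker (Matrix.toLin' del)).mkQ.exists_rightInverse_of_surjective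
    (LinearMap.range_eq_top.2 (LinearMap.ker (Matrix.toLin' del)).mkQ_surjective)
  set p : (Fin m → ℤ) →ₗ[ℤ] (Fin m → ℤ) := LinearMap.id - σ2.comp (LinearMap.ker (Matrix.toLin' del)).mkQ with hp
  have hpK : ∀ x, p x ∈ (LinearMap.ker (Matrix.toLin' del)) := by
    intro x
    have h1 : (LinearMap.ker (Matrix.toLin' del)).mkQ (p x) = 0 := by
      have := congrFun (congrArg (fun f => f.toFun) hσ2) ((LinearMap.ker (Matrix.toLin' del)).mkQ x)
      simp only [hp, LinearMap.sub_apply, LinearMap.id_apply, LinearMap.comp_apply, map_sub]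
      simpa using congrArg (fun y => (LinearMap.ker (Matrix.toLin' del)).mkQ x - y) this |>.symm ▸ sub_self ((LinearMap.ker (Matrix.toLin' del)).mkQ x)
    rwa [← LinearMap.mem_ker, Submodule.ker_mkQ] at h1
  have hpid : ∀ x ∈ (LinearMap.ker (Matrix.toLin' del)), p x = x := by
    intro x hx
    have h0 : (LinearMap.ker (Matrix.toLin' del)).mkQ x = 0 := by rwa [← LinearMap.mem_ker, Submodule.ker_mkQ]
    simp [hp, h0]
  -- iota gives an iso onto (LinearMap.ker (Matrix.toLin' del))
  have hmv : ∀ c, Matrix.toLin' iota c = ∑ j, c j • iota.transpose j := by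
    intro c
    funext kk
    simp [Matrix.toLin'_apply, Matrix.mulVec, dotProduct, Matrix.transpose_apply,
      Finset.sum_apply, mul_comm]
  have hinjι : Function.Injective (Matrix.toLin' iota) := by
    rw [← LinearMap.ker_eq_bot, Submodule.eq_bot_iff]
    intro c hc
    rw [LinearMap.mem_ker, hmv] at hc
    funext j
    exact Fintype.linearIndependent_iff.mp hli c hc j
  have hmemK : ∀ c, Matrix.toLin' iota c ∈ (LinearMap.ker (Matrix.toLin' del)) := by
    intro c
    rw [← hrange]
    exact LinearMap.mem_range_self _ c
  set q0 : (Fin g → ℤ) →ₗ[ℤ] (LinearMap.ker (Matrix.toLin' del)) := (Matrix.toLin' iota).codRestrict (LinearMap.ker (Matrix.toLin' del)) hmemK with hq0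
  have hq0bij : Function.Bijective q0 := by
    constructor
    · intro c d h
      apply hinjι
      exact congrArg Subtype.val h
    · rintro ⟨x, hx⟩
      rw [← hrange] at hx
      obtain ⟨c, hc⟩ := hx
      exact ⟨c, Subtype.ext hc⟩
  set qe := LinearEquiv.ofBijective q0 hq0bij with hqe
  set ℓ : (Fin m → ℤ) →ₗ[ℤ] (Fin g → ℤ) :=
    qe.symm.toLinearMap.comp (p.codRestrict (LinearMap.ker (Matrix.toLin' del)) hpK) with hℓ
  have hlι : ℓ.comp (Matrix.toLin' iota) = LinearMap.id := by
    apply LinearMap.ext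
    intro c
    have h1 : p (Matrix.toLin' iota c) = Matrix.toLin' iota c := hpid _ (hmemK c)
    have h2 : (p.codRestrict (LinearMap.ker (Matrix.toLin' del)) hpK) (Matrix.toLin' iota c) = q0 c := Subtype.ext h1
    simp only [hℓ, LinearMap.comp_apply, h2, LinearMap.id_apply]
    have h3 : q0 c = qe c := rfl
    rw [h3]
    exact qe.symm_apply_apply c
  set T : Matrix (Fin g) (Fin m) ℤ := LinearMap.toMatrix' ℓ with hT
  have hTι : T * iota = 1 := by
    apply Matrix.toLin'.injective
    rw [Matrix.toLin'_mul, hT, Matrix.toLin'_toMatrix', Matrix.toLin'_one]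
    exact hlι
  -- surjectivity of iotaᵀ
  have hsurjι : Function.Surjective (Matrix.toLin' iota.transpose) := by
    intro y
    refine ⟨Tᵀ *ᵥ y, ?_⟩
    rw [Matrix.toLin'_apply, Matrix.mulVec_mulVec, ← Matrix.transpose_mul, hTι,
      Matrix.transpose_one, Matrix.one_mulVec]
  -- delRed * iota = 0
  have hDι : delRed * iota = 0 := by
    ext i j
    have hj : iota.transpose j ∈ LinearMap.ker (Matrix.toLin' delRed) := by
      rw [← hker, ← hspan]
      exact Submodule.subset_span ⟨j, rfl⟩
    rw [LinearMap.mem_ker] at hj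
    have := congrFun hj i
    simpa [Matrix.toLin'_apply, Matrix.mulVec, dotProduct, Matrix.mul_apply,
      Matrix.transpose_apply] using this
  -- ker iotaᵀ = range delRedᵀ
  have hkerT : LinearMap.ker (Matrix.toLin' iota.transpose) =
      LinearMap.range (Matrix.toLin' delRed.transpose) := by
    apply le_antisymm
    · intro x hx
      rw [LinearMap.mem_ker] at hx
      have horth : ∀ z ∈ LinearMap.ker (Matrix.toLin' delRed), z ⬝ᵥ x = 0 := by
        intro z hz
        rw [← hker, ← hspan] at hz
        induction hz using Submodule.span_induction with
        | mem z hz =>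
          obtain ⟨j, rfl⟩ := hz
          have := congrFun hx j
          simpa [Matrix.toLin'_apply, Matrix.mulVec, dotProduct,
            Matrix.transpose_apply] using this
        | zero => simp
        | add a b _ _ ha hb => rw [add_dotProduct, ha, hb, add_zero]
        | smul r a _ ha => rw [smul_dotProduct, ha, smul_zero]
      refine ⟨Sᵀ *ᵥ x, ?_⟩
      rw [Matrix.toLin'_apply, Matrix.mulVec_mulVec, ← Matrix.transpose_mul]
      funext kk
      have hm0 : delRed * (1 - S * delRed) = 0 := by
        rw [Matrix.mul_sub, Matrix.mul_one, ← Matrix.mul_assoc, hDS, Matrix.one_mul, sub_self]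
      have hz : (fun l => (1 - S * delRed : Matrix (Fin m) (Fin m) ℤ) l kk) ∈ LinearMap.ker (Matrix.toLin' delRed) := by
        rw [LinearMap.mem_ker]
        funext i
        have := congrFun (congrFun hm0 i) kk
        simpa [Matrix.toLin'_apply, Matrix.mulVec, dotProduct, Matrix.mul_apply] using this
      have h2 := horth _ hz
      have h4 : ∑ l, ((1 : Matrix (Fin m) (Fin m) ℤ) l kk - (S * delRed) l kk) * x l = 0 := by
        simpa [dotProduct, Matrix.sub_apply] using h2
      simp only [sub_mul, Finset.sum_sub_distrib, sub_eq_zero] at h4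
      have h5 : ∑ l, ((1 : Matrix (Fin m) (Fin m) ℤ) l kk) * x l = x kk := by
        simp [Matrix.one_apply, ite_mul, Finset.sum_ite_eq']
      have h3 : ((S * delRed)ᵀ *ᵥ x) kk = ∑ l, (S * delRed) l kk * x l := by
        simp [Matrix.mulVec, dotProduct, Matrix.transpose_apply]
      rw [h3, ← h4]
      exact h5
    · rintro x ⟨y, rfl⟩
      rw [LinearMap.mem_ker, Matrix.toLin'_apply, Matrix.toLin'_apply, Matrix.mulVec_mulVec,
        ← Matrix.transpose_mul, hDι, Matrix.transpose_zero, Matrix.zero_mulVec]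
  -- assemble
  have hEq : (LinearMap.range (Matrix.toLin' (delRed * delRedᵀ))).comap (Matrix.toLin' delRed)
      = (LinearMap.range (Matrix.toLin' (iota.transpose * iota))).comap
          (Matrix.toLin' iota.transpose) := by
    have h1 := comap_range_mul delRed
    have h2 := comap_range_mul iota.transpose
    rw [Matrix.transpose_transpose] at h2
    rw [h1, h2, hkerR, hkerT, sup_comm]
  exact ⟨((quotEquivOfSurj (Matrix.toLin' delRed) hsurjD _).symm.trans
    ((Submodule.quotEquivOfEq _ _ hEq).trans
      (quotEquivOfSurj (Matrix.toLin' iota.transpose) hsurjι _))).toAddEquiv⟩
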